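/- Let η(x) = (5/3) tanh(3x/2) and Q³ = (5/2) sech²(3x/2). Then the virial potential A(x) = 1 + (1/2)(η'''/η') - (3/4)(η''/η')² - 4 (Q³η)'/η' equals 75/4 - 12 Q(x)³ for all x ∈ ℝ. -/

import Mathlib

noncomputable def sech (x : ℝ) : ℝ := 2 / (Real.exp x + Real.exp (-x))

/-- The quartic KdV soliton. -/
noncomputable def Q (x : ℝ) : ℝ := ((5 : ℝ) / 2) ^ ((1 : ℝ) / 3) * sech (3 * x / 2) ^ ((2 : ℝ) / 3)

/-- The virial weight `η(x) = (5/3) tanh(3x/2)`. -/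
noncomputable def eta (x : ℝ) : ℝ := (5 / 3) * Real.tanh (3 * x / 2)

/-- The virial potential `A`. -/
noncomputable def A (x : ℝ) : ℝ :=
  1 + (1 / 2) * (iteratedDeriv 3 eta x / deriv eta x)
    - (3 / 4) * (deriv (deriv eta) x / deriv eta x) ^ 2
    - 4 * (deriv (fun y => Q y ^ 3 * eta y) x / deriv eta x)

lemma cosh_ne (y : ℝ) : Real.cosh y ≠ 0 := (Real.cosh_pos y).ne'

lemma sech_eq (y : ℝ) : sech y = 1 / Real.cosh y := by
  rw [Real.cosh_eq, sech]
  rw [one_div, div_eq_iff (by positivity)]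
  field_simp

lemma sech_pos (y : ℝ) : 0 < sech y := by
  rw [sech_eq]; positivity

lemma Q_cube (x : ℝ) : Q x ^ 3 = (5/2) / Real.cosh (3*x/2) ^ 2 := by
  have hs := (sech_pos (3*x/2)).le
  rw [Q, mul_pow, ← Real.rpow_natCast (((5:ℝ)/2) ^ ((1:ℝ)/3)) 3,
    ← Real.rpow_natCast ((sech (3*x/2)) ^ ((2:ℝ)/3)) 3,
    ← Real.rpow_mul (by norm_num), ← Real.rpow_mul hs]
  norm_num
  rw [sech_eq, div_pow]
  field_simp

lemma hu (x : ℝ) : HasDerivAt (fun y : ℝ => 3 * y / 2) (3/2) x := by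
  simpa using ((hasDerivAt_id x).const_mul (3:ℝ)).div_const 2

lemma heta1 (x : ℝ) : HasDerivAt eta ((5/2) / Real.cosh (3*x/2) ^ 2) x := by
  have h : HasDerivAt (fun y : ℝ => (5/3) * (Real.sinh (3*y/2) / Real.cosh (3*y/2)))
      ((5/2) / Real.cosh (3*x/2) ^ 2) x := by
    have := (((hu x).sinh).div ((hu x).cosh) (cosh_ne _)).const_mul (5/3 : ℝ)
    refine this.congr_deriv ?_
    have h2 := Real.cosh_sq_sub_sinh_sq (3*x/2)
    field_simp
    nlinarith [h2]
  have : eta = fun y : ℝ => (5/3) * (Real.sinh (3*y/2) / Real.cosh (3*y/2)) := by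
    funext y; rw [eta, Real.tanh_eq_sinh_div_cosh]
  rw [this]; exact h

lemma deriv_eta : deriv eta = fun x => (5/2) / Real.cosh (3*x/2) ^ 2 :=
  funext fun x => (heta1 x).deriv

lemma heta2 (x : ℝ) : HasDerivAt (fun x => (5/2) / Real.cosh (3*x/2) ^ 2)
    (-(15/2) * Real.sinh (3*x/2) / Real.cosh (3*x/2) ^ 3) x := by
  have h := (hasDerivAt_const x ((5:ℝ)/2)).div ((hu x).cosh.pow 2) (pow_ne_zero 2 (cosh_ne _))
  refine h.congr_deriv ?_
  simp only [Pi.pow_apply]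
  have := cosh_ne (3*x/2)
  field_simp
  ring

lemma deriv2_eta : deriv (deriv eta) = fun x => -(15/2) * Real.sinh (3*x/2) / Real.cosh (3*x/2) ^ 3 := by
  rw [deriv_eta]; exact funext fun x => (heta2 x).deriv

lemma heta3 (x : ℝ) : HasDerivAt (fun x => -(15/2) * Real.sinh (3*x/2) / Real.cosh (3*x/2) ^ 3)
    (-(45/4)/Real.cosh (3*x/2)^2 + (135/4) * Real.sinh (3*x/2)^2 / Real.cosh (3*x/2)^4) x := by
  have h := (((hu x).sinh.const_mul (-(15/2):ℝ)).div ((hu x).cosh.pow 3) (pow_ne_zero 3 (cosh_ne _)))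
  refine h.congr_deriv ?_
  simp only [Pi.pow_apply]
  have := cosh_ne (3*x/2)
  field_simp
  ring

lemma iter3_eta (x : ℝ) : iteratedDeriv 3 eta x
    = -(45/4)/Real.cosh (3*x/2)^2 + (135/4) * Real.sinh (3*x/2)^2 / Real.cosh (3*x/2)^4 := by
  have : iteratedDeriv 3 eta = deriv (deriv (deriv eta)) := by
    simp [iteratedDeriv_succ, iteratedDeriv_one]
  rw [this, deriv2_eta]
  exact (heta3 x).deriv

lemma hQeta (x : ℝ) : deriv (fun y => Q y ^ 3 * eta y) x
    = (25/4)/Real.cosh (3*x/2)^2 - (75/4) * Real.sinh (3*x/2)^2 / Real.cosh (3*x/2)^4 := by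
  have hfun : (fun y => Q y ^ 3 * eta y) = fun y => (25/6) * Real.sinh (3*y/2) / Real.cosh (3*y/2) ^ 3 := by
    funext y
    rw [Q_cube, eta, Real.tanh_eq_sinh_div_cosh]
    have := cosh_ne (3*y/2)
    field_simp
    ring
  rw [hfun]
  have h := (((hu x).sinh.const_mul ((25/6):ℝ)).div ((hu x).cosh.pow 3) (pow_ne_zero 3 (cosh_ne _)))
  have h' : HasDerivAt (fun y => (25/6) * Real.sinh (3*y/2) / Real.cosh (3*y/2) ^ 3)
      ((25/4)/Real.cosh (3*x/2)^2 - (75/4) * Real.sinh (3*x/2)^2 / Real.cosh (3*x/2)^4) x := by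
    refine h.congr_deriv ?_
    simp only [Pi.pow_apply]
    have := cosh_ne (3*x/2)
    field_simp
    ring
  exact h'.deriv

/-- `A(x) = 75/4 - 12 Q(x)³`. -/
theorem A_eq (x : ℝ) : A x = 75 / 4 - 12 * Q x ^ 3 := by
  have hc := cosh_ne (3*x/2)
  have hsq : Real.sinh (3*x/2) ^ 2 = Real.cosh (3*x/2) ^ 2 - 1 := by
    nlinarith [Real.cosh_sq_sub_sinh_sq (3*x/2)]
  rw [A, Q_cube, iter3_eta, hQeta, deriv2_eta, deriv_eta, hsq]
  simp only
  field_simp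
  linear_combination (-1350) * hsq
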